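/- Under the same hypotheses (analytic eigenvector fields E_i : U → X spanning X, with every component of U meeting 𝕋), the operator T has a dense set of periodic points; in particular the closed linear span of the eigenspaces ker(T − λ) over all roots of unity λ equals X. -/

import Mathlib

open Filter Topology

/-- Separation: if a submodule is not dense, there is a nonzero continuous functional
vanishing on it. -/
lemma exists_dual_of_not_dense {X : Type*} [NormedAddCommGroup X] [NormedSpace ℂ X]
    (p : Submodule ℂ X) (h : ¬ Dense (p : Set X)) :
    ∃ φ : X →L[ℂ] ℂ, φ ≠ 0 ∧ ∀ y ∈ p, φ y = 0 := by
  set q := p.topologicalClosure with hq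
  haveI : IsClosed (q : Set X) := p.isClosed_topologicalClosure
  obtain ⟨x, hx⟩ : ∃ x : X, x ∉ q := by
    by_contra hc
    push_neg at hc
    apply h
    have : (q : Set X) = Set.univ := Set.eq_univ_of_forall hc
    have : closure (p : Set X) = Set.univ := by
      rw [← this]; rfl
    rw [dense_iff_closure_eq, this]
  let mkc : X →L[ℂ] X ⧸ q :=
    LinearMap.mkContinuous q.mkQ 1 (fun y => by
      simpa using Submodule.Quotient.norm_mk_le q y)
  have hxne : mkc x ≠ 0 := by
    simp only [mkc, LinearMap.mkContinuous_apply, Submodule.mkQ_apply]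
    rw [Ne, Submodule.Quotient.mk_eq_zero]
    exact hx
  obtain ⟨g, hgnorm, hgx⟩ := exists_dual_vector ℂ (mkc x) (norm_ne_zero_iff.mpr hxne)
  refine ⟨g.comp mkc, ?_, ?_⟩
  · intro hzero
    have : g (mkc x) = 0 := by
      have := congrFun (congrArg DFunLike.coe hzero) x
      simpa using this
    rw [hgx] at this
    exact hxne (norm_eq_zero.mp (Complex.ofReal_eq_zero.mp this))
  · intro y hy
    have : mkc y = 0 := by
      simp only [mkc, LinearMap.mkContinuous_apply, Submodule.mkQ_apply]
      rw [Submodule.Quotient.mk_eq_zero]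
      exact Submodule.le_topologicalClosure p hy
    simp [ContinuousLinearMap.comp_apply, this]

/-- Roots of unity accumulate at every point of the unit circle. -/
lemma frequently_rootOfUnity {z : ℂ} (hz : ‖z‖ = 1) :
    ∃ᶠ w in 𝓝[≠] z, ∃ n : ℕ, 0 < n ∧ w ^ n = 1 := by
  set c : ℝ := z.arg / (2 * Real.pi) with hc
  have hπ : (2 : ℝ) * Real.pi ≠ 0 := by positivity
  have hzc : Complex.exp ((2 * Real.pi * c : ℝ) * Complex.I) = z := by
    have : (2 * Real.pi * c : ℝ) = z.arg := by rw [hc]; field_simp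
    rw [this]
    have := Complex.norm_mul_exp_arg_mul_I z
    rw [hz] at this
    simpa using this
  -- choose rationals
  have hch : ∀ k : ℕ, ∃ r : ℚ, c < (r : ℝ) ∧ (r : ℝ) < c + 1 / (k + 1) := by
    intro k
    have : c < c + 1 / (k + 1) := by
      have : (0:ℝ) < 1 / (k + 1) := by positivity
      linarith
    exact_mod_cast exists_rat_btwn this
  choose r hr1 hr2 using hch
  set w : ℕ → ℂ := fun k => Complex.exp ((2 * Real.pi * (r k) : ℝ) * Complex.I) with hw
  have hroot : ∀ k, ∃ n : ℕ, 0 < n ∧ (w k) ^ n = 1 := by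
    intro k
    refine ⟨(r k).den, (r k).pos, ?_⟩
    rw [hw, ← Complex.exp_nat_mul]
    have hden : ((r k : ℂ)) * ((r k).den : ℂ) = ((r k).num : ℂ) := by
      exact_mod_cast congrArg (fun q : ℚ => (q : ℂ)) (Rat.mul_den_eq_num (r k))
    have : ((r k).den : ℂ) * ((2 * Real.pi * (r k) : ℝ) * Complex.I)
        = ((r k).num : ℤ) * (2 * Real.pi * Complex.I) := by
      push_cast
      rw [← hden]
      ring
    rw [this, Complex.exp_int_mul_two_pi_mul_I]
  have hne : ∀ k, w k ≠ z := by
    intro k hEq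
    rw [hw, ← hzc, Complex.exp_eq_exp_iff_exists_int] at hEq
    obtain ⟨m, hm⟩ := hEq
    have : ((r k : ℝ) : ℂ) = ((c + m : ℝ) : ℂ) := by
      have h2 : (2 * Real.pi : ℂ) * Complex.I ≠ 0 := by
        refine mul_ne_zero (mul_ne_zero two_ne_zero ?_) Complex.I_ne_zero
        exact_mod_cast Real.pi_ne_zero
      push_cast at hm ⊢
      have : ((r k : ℂ)) * (2 * Real.pi * Complex.I) = (c + m : ℂ) * (2 * Real.pi * Complex.I) := by
        rw [add_mul]
        convert hm using 1 <;> ring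
      exact mul_right_cancel₀ (by push_cast at h2 ⊢; exact h2) this
    have hreal : (r k : ℝ) = c + m := by exact_mod_cast this
    have h1 : (0 : ℝ) < m := by
      have := hr1 k; rw [hreal] at this; linarith
    have h2 : (m : ℝ) < 1 := by
      have := hr2 k; rw [hreal] at this
      have hk : (1 : ℝ) / (k + 1) ≤ 1 := by
        rw [div_le_one (by positivity)]; linarith [Nat.cast_nonneg (α := ℝ) k]
      linarith
    have : (0 : ℤ) < m := by exact_mod_cast h1
    have : (1 : ℤ) ≤ m := this
    have : (1 : ℝ) ≤ m := by exact_mod_cast this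
    linarith
  have hrtend : Tendsto (fun k => (r k : ℝ)) atTop (𝓝 c) := by
    have h1 : Tendsto (fun k : ℕ => c + 1 / ((k : ℝ) + 1)) atTop (𝓝 c) := by
      have : Tendsto (fun n : ℕ => 1 / ((n : ℝ) + 1)) atTop (𝓝 0) :=
        tendsto_one_div_add_atTop_nhds_zero_nat
      simpa using tendsto_const_nhds.add this
    exact tendsto_of_tendsto_of_tendsto_of_le_of_le tendsto_const_nhds h1
      (fun k => (hr1 k).le) (fun k => (hr2 k).le)
  have hcont : Continuous fun t : ℝ => Complex.exp ((2 * Real.pi * t : ℝ) * Complex.I) := by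
    fun_prop
  have hwt : Tendsto w atTop (𝓝 z) := by
    rw [← hzc]
    exact (hcont.tendsto c).comp hrtend
  have hwt' : Tendsto w atTop (𝓝[≠] z) :=
    tendsto_nhdsWithin_of_tendsto_nhds_of_eventually_within w hwt
      (Eventually.of_forall hne)
  exact hwt'.frequently (Frequently.of_forall hroot)

lemma pow_apply_eig {X : Type*} [NormedAddCommGroup X] [NormedSpace ℂ X]
    (T : X →L[ℂ] X) (lam : ℂ) (x : X) (h : T x = lam • x) :
    ∀ n : ℕ, (T ^ n) x = lam ^ n • x := by
  intro n
  induction n with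
  | zero => simp
  | succ n ih =>
    rw [pow_succ, ContinuousLinearMap.mul_apply, h, map_smul, ih, smul_smul, pow_succ]
    ring_nf

lemma pow_fix_mul {X : Type*} [NormedAddCommGroup X] [NormedSpace ℂ X]
    (T : X →L[ℂ] X) (x : X) (n : ℕ) (h : (T ^ n) x = x) (m : ℕ) : (T ^ (n * m)) x = x := by
  induction m with
  | zero => simp
  | succ m ih =>
    rw [Nat.mul_succ, pow_add, ContinuousLinearMap.mul_apply, h, ih]


/-- Under the same hypotheses (countable family of analytic eigenvector fields `E i : U → X`
spanning a dense subspace, every connected component of the open set `U` meeting the unit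
circle), the operator `T` has a dense set of periodic points; in particular the closed
linear span of the eigenspaces `ker (T - λ)` over all roots of unity `λ` is all of `X`. -/
theorem dense_periodic_points_of_analytic_eigenfields
    {X : Type*} [NormedAddCommGroup X] [NormedSpace ℂ X] [CompleteSpace X]
    [TopologicalSpace.SeparableSpace X]
    (T : X →L[ℂ] X)
    {I : Type*} [Countable I]
    (U : Set ℂ) (hU : IsOpen U)
    (E : I → ℂ → X)
    (hanal : ∀ i, DifferentiableOn ℂ (E i) U)
    (heig : ∀ i, ∀ lam ∈ U, T (E i lam) = lam • E i lam)
    (hspan : Dense ((Submodule.span ℂ {x : X | ∃ i, ∃ lam ∈ U, x = E i lam}) : Set X))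
    (hcirc : ∀ z ∈ U, (connectedComponentIn U z ∩ Metric.sphere (0 : ℂ) 1).Nonempty) :
    Dense {x : X | ∃ n : ℕ, 0 < n ∧ (T ^ n) x = x} ∧
      Dense ((Submodule.span ℂ
        {x : X | ∃ lam : ℂ, (∃ n : ℕ, 0 < n ∧ lam ^ n = 1) ∧ T x = lam • x}) : Set X) := by
  classical
  set S : Set X := {x : X | ∃ i, ∃ lam ∈ U, (∃ n : ℕ, 0 < n ∧ lam ^ n = 1) ∧ x = E i lam}
    with hS
  -- Step 1: span of eigenvectors at roots of unity is dense
  have key : Dense ((Submodule.span ℂ S : Submodule ℂ X) : Set X) := by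
    by_contra hnd
    obtain ⟨φ, φne, φvan⟩ := exists_dual_of_not_dense _ hnd
    have hvanU : ∀ i, ∀ lam ∈ U, φ (E i lam) = 0 := by
      intro i lam hlam
      obtain ⟨z, hzC, hzS⟩ := hcirc lam hlam
      have hCopen : IsOpen (connectedComponentIn U lam) := hU.connectedComponentIn
      have hCsub : connectedComponentIn U lam ⊆ U := connectedComponentIn_subset U lam
      have hanal' : AnalyticOnNhd ℂ (fun w => φ (E i w)) (connectedComponentIn U lam) := by
        have h1 : AnalyticOnNhd ℂ (E i) U := (hanal i).analyticOnNhd hU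
        exact (φ.comp_analyticOnNhd h1).mono hCsub
      have habs : ‖z‖ = 1 := by
        have := Metric.mem_sphere.mp hzS
        rwa [Complex.dist_eq, sub_zero] at this
      have hfreq : ∃ᶠ w in 𝓝[≠] z, φ (E i w) = 0 := by
        have h1 := frequently_rootOfUnity habs
        have h2 : ∀ᶠ w in 𝓝[≠] z, w ∈ connectedComponentIn U lam :=
          eventually_nhdsWithin_of_eventually_nhds (hCopen.eventually_mem hzC)
        refine (h1.and_eventually h2).mono ?_
        rintro w ⟨hw, hwC⟩
        exact φvan _ (Submodule.subset_span ⟨i, w, hCsub hwC, hw, rfl⟩)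
      have hpre : IsPreconnected (connectedComponentIn U lam) :=
        (isPreconnected_connectedComponentIn)
      have := hanal'.eqOn_zero_of_preconnected_of_frequently_eq_zero hpre hzC hfreq
      exact this (mem_connectedComponentIn hlam)
    have hker : Submodule.span ℂ {x : X | ∃ i, ∃ lam ∈ U, x = E i lam}
        ≤ LinearMap.ker (φ : X →ₗ[ℂ] ℂ) := by
      rw [Submodule.span_le]
      rintro x ⟨i, lam, hlam, rfl⟩
      exact hvanU i lam hlam
    have hzero : (φ : X → ℂ) = (0 : X → ℂ) := by
      refine Continuous.ext_on hspan φ.continuous continuous_zero ?_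
      intro x hx
      exact hker hx
    apply φne
    ext x
    exact congrFun hzero x
  -- Step 2: S is contained in the eigenvector-at-roots-of-unity set
  set A : Set X := {x : X | ∃ lam : ℂ, (∃ n : ℕ, 0 < n ∧ lam ^ n = 1) ∧ T x = lam • x} with hA
  have hSA : S ⊆ A := by
    rintro x ⟨i, lam, hlam, hroot, rfl⟩
    exact ⟨lam, hroot, heig i lam hlam⟩
  have keyA : Dense ((Submodule.span ℂ A : Submodule ℂ X) : Set X) :=
    key.mono (Submodule.span_mono hSA)
  refine ⟨?_, keyA⟩
  -- Step 3: every element of span A is periodic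
  have hper : ∀ x ∈ Submodule.span ℂ A, ∃ n : ℕ, 0 < n ∧ (T ^ n) x = x := by
    intro x hx
    induction hx using Submodule.span_induction with
    | mem x hxA =>
      obtain ⟨lam, ⟨n, hn, hl⟩, hTx⟩ := hxA
      exact ⟨n, hn, by rw [pow_apply_eig T lam x hTx n, hl, one_smul]⟩
    | zero => exact ⟨1, one_pos, by simp⟩
    | add x y _ _ hx hy =>
      obtain ⟨n, hn, hxn⟩ := hx
      obtain ⟨m, hm, hym⟩ := hy
      refine ⟨n * m, Nat.mul_pos hn hm, ?_⟩
      rw [map_add, pow_fix_mul T x n hxn m, mul_comm, pow_fix_mul T y m hym n]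
    | smul c x _ hx =>
      obtain ⟨n, hn, hxn⟩ := hx
      exact ⟨n, hn, by rw [map_smul, hxn]⟩
  exact keyA.mono hper
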